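/- arXiv:2403.00697 — 5 statements merged into one kernel-verified Lean document; each statement's English description precedes it below -/
import Mathlib

section
/- Let w₁,…,wₙ be a sequence of elements of a torsion-free abelian group A with 0 < w₁ ≤ ⋯ ≤ wₙ (for A = ℤ say). Suppose indices i,j,k,h in {1,…,n} satisfy w_i + w_j ≤ w_k and w_{n+1-i} + w_{n+1-j} ≤ w_h, and suppose w_m + w_{n+1-m} ≥ wₙ for all m. Then w_k + w_h = 2wₙ; in particular if additionally w_m + w_{n+1-m} > w_{n-1} for all m, then k = h = n and wₙ = w_i + w_{n+1-i} = w_j + w_{n+1-j}, w_{n+1-i} = w_j, w_{n+1-j} = w_i. -/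
/-- For a nondecreasing positive sequence `w₁,…,wₙ` (here `n = N+2`)
satisfying (F2) `w_m + w_m̂ ≥ wₙ` for all `m` (`m̂ = n+1−m`, i.e. `Fin.rev`), if
`w_i + w_j ≤ w_k` and `w_î + w_ĵ ≤ w_h`, then `w_k + w_h = 2wₙ`; if moreover
`w_m + w_m̂ > w_{n−1}` for all `m`, then `k = h = n`,
`wₙ = w_i + w_î = w_j + w_ĵ`, `w_î = w_j` and `w_ĵ = w_i`. -/
theorem stmt_12 (N : ℕ) (w : Fin (N + 2) → ℤ)
    (hpos : ∀ i, 0 < w i) (hmono : Monotone w)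
    (hF2 : ∀ m : Fin (N + 2), w (Fin.last (N + 1)) ≤ w m + w m.rev)
    (i j k h : Fin (N + 2))
    (hij : w i + w j ≤ w k) (hrev : w i.rev + w j.rev ≤ w h) :
    w k + w h = 2 * w (Fin.last (N + 1)) ∧
    ((∀ m : Fin (N + 2), w ⟨N, by omega⟩ < w m + w m.rev) →
      k = Fin.last (N + 1) ∧ h = Fin.last (N + 1) ∧
      w (Fin.last (N + 1)) = w i + w i.rev ∧
      w (Fin.last (N + 1)) = w j + w j.rev ∧
      w i.rev = w j ∧ w j.rev = w i) := by
  have hF2i := hF2 i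
  have hF2j := hF2 j
  have hk : w k ≤ w (Fin.last (N + 1)) := hmono (Fin.le_last k)
  have hh : w h ≤ w (Fin.last (N + 1)) := hmono (Fin.le_last h)
  have hwk : w k = w (Fin.last (N + 1)) := by linarith
  have hwh : w h = w (Fin.last (N + 1)) := by linarith
  refine ⟨by linarith, fun hs => ?_⟩
  have hkl : k = Fin.last (N + 1) := by
    by_contra hne
    have : (k : ℕ) ≤ N := by
      have := k.isLt
      have : (k : ℕ) ≠ N + 1 := fun hc => hne (Fin.ext hc)
      omega
    have h1 : w k ≤ w ⟨N, by omega⟩ := hmono this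
    have := hs i
    linarith
  have hhl : h = Fin.last (N + 1) := by
    by_contra hne
    have : (h : ℕ) ≤ N := by
      have := h.isLt
      have : (h : ℕ) ≠ N + 1 := fun hc => hne (Fin.ext hc)
      omega
    have h1 : w h ≤ w ⟨N, by omega⟩ := hmono this
    have := hs i
    linarith
  exact ⟨hkl, hhl, by linarith, by linarith, by linarith, by linarith⟩
end

section
/- Let w₁,…,wₙ be elements of a torsion-free abelian group such that: (G1) if w_i + w_j = w_k with i ≠ j then i < k and j < k; and (G5) if w_i + w_j and w_{n+1-i} + w_{n+1-j} are both weights (values occurring in the sequence), then w_j = w_{n+1-i} and w_i = w_{n+1-j}. Suppose additionally (G2): if w_i + w_{n+1-i} = w_j then j = n. Then whenever w_i + w_j is a weight and w_{î} + w_{ĵ} is a weight (î = n+1−i), we have w_i + w_j = wₙ and wₙ has multiplicity one in the sequence. -/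
/-- For a sequence `w₁,…,wₙ` in a torsion-free abelian group satisfying
(G1), (G5) and (G2), whenever `w_i + w_j` and `w_î + w_ĵ` are both weights (values of the
sequence), one has `w_i + w_j = wₙ` and `wₙ` has multiplicity one. (`î = n+1−i`.) -/
theorem stmt_13 (N : ℕ) (A : Type*) [AddCommGroup A] [NoZeroSMulDivisors ℤ A]
    (w : Fin (N + 1) → A)
    (hG1 : ∀ i j k : Fin (N + 1), w i + w j = w k → i ≠ j → i < k ∧ j < k)
    (hG5 : ∀ i j : Fin (N + 1), (∃ k, w i + w j = w k) → (∃ k, w i.rev + w j.rev = w k) →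
      w j = w i.rev ∧ w i = w j.rev)
    (hG2 : ∀ i j : Fin (N + 1), w i + w i.rev = w j → j = Fin.last N) :
    ∀ i j : Fin (N + 1), (∃ k, w i + w j = w k) → (∃ k, w i.rev + w j.rev = w k) →
      w i + w j = w (Fin.last N) ∧
      ∀ m : Fin (N + 1), w m = w (Fin.last N) → m = Fin.last N := by
  intro i j h1 h2
  obtain ⟨hj, hi⟩ := hG5 i j h1 h2
  obtain ⟨k, hk⟩ := h1
  rw [hj] at hk ⊢
  have hklast := hG2 i k hk
  subst hklast
  refine ⟨hk, fun m hm => hG2 i m ?_⟩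
  rw [hk, hm]
end

section
/- Consider the 6-dimensional real nilpotent Lie algebra g with basis e₁,…,e₆ and nonzero brackets [e₁,e₂] = -e₃, [e₁,e₄] = -e₅, [e₁,e₅] = -e₆, [e₂,e₃] = -e₆, [e₂,e₄] = -e₆ (so de³ = e¹∧e², de⁵ = e¹∧e⁴, de⁶ = e¹∧e⁵ + e²∧e³ + e²∧e⁴). Then the diagonal endomorphism D = diag(1/5, 2/5, 3/5, 3/5, 4/5, 1) relative to this basis is a derivation of g. -/
private lemma my_lie_sum {g : Type*} [LieRing g] [LieAlgebra ℝ g] (x : g)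
    (s : Finset (Fin 6)) (f : Fin 6 → g) : ⁅x, ∑ i ∈ s, f i⁆ = ∑ i ∈ s, ⁅x, f i⁆ :=
  map_sum (LieAlgebra.ad ℝ g x) f s

private lemma my_sum_lie {g : Type*} [LieRing g] [LieAlgebra ℝ g] (y : g)
    (s : Finset (Fin 6)) (f : Fin 6 → g) : ⁅∑ i ∈ s, f i, y⁆ = ∑ i ∈ s, ⁅f i, y⁆ :=
  map_sum ((LieAlgebra.ad ℝ g).flip y) f s

/-- On the 6-dimensional nilpotent Lie algebra
`(0,0,e¹²,e¹³,e¹⁴,e¹⁵+e²³+e²⁴)`, i.e. with nonzero brackets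
`[e₁,e₂] = -e₃, [e₁,e₄] = -e₅, [e₁,e₅] = -e₆, [e₂,e₃] = -e₆, [e₂,e₄] = -e₆`
(basis indexed by `Fin 6`, so `e₁ = e 0`, …), the diagonal endomorphism
`D = diag(1/5, 2/5, 3/5, 3/5, 4/5, 1)` is a derivation. -/
theorem stmt_14 (g : Type*) [LieRing g] [LieAlgebra ℝ g]
    (e : Module.Basis (Fin 6) ℝ g)
    (h12 : ⁅e 0, e 1⁆ = -e 2) (h14 : ⁅e 0, e 3⁆ = -e 4) (h15 : ⁅e 0, e 4⁆ = -e 5)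
    (h23 : ⁅e 1, e 2⁆ = -e 5) (h24 : ⁅e 1, e 3⁆ = -e 5)
    (hzero : ∀ i j : Fin 6, i < j →
      (i, j) ∉ ({(0, 1), (0, 3), (0, 4), (1, 2), (1, 3)} : Set (Fin 6 × Fin 6)) →
      ⁅e i, e j⁆ = 0)
    (D : g →ₗ[ℝ] g)
    (hD : ∀ i : Fin 6, D (e i) = (![(1 : ℝ)/5, 2/5, 3/5, 3/5, 4/5, 1] i) • e i) :
    ∀ x y : g, D ⁅x, y⁆ = ⁅D x, y⁆ + ⁅x, D y⁆ := by
  have keyLT : ∀ i j : Fin 6, i < j → D ⁅e i, e j⁆ = ⁅D (e i), e j⁆ + ⁅e i, D (e j)⁆ := by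
    intro i j hlt
    have v0 : ![(1:ℝ)/5, 2/5, 3/5, 3/5, 4/5, 1] 0 = 1/5 := rfl
    have v1 : ![(1:ℝ)/5, 2/5, 3/5, 3/5, 4/5, 1] 1 = 2/5 := rfl
    have v2 : ![(1:ℝ)/5, 2/5, 3/5, 3/5, 4/5, 1] 2 = 3/5 := rfl
    have v3 : ![(1:ℝ)/5, 2/5, 3/5, 3/5, 4/5, 1] 3 = 3/5 := rfl
    have v4 : ![(1:ℝ)/5, 2/5, 3/5, 3/5, 4/5, 1] 4 = 4/5 := rfl
    have v5 : ![(1:ℝ)/5, 2/5, 3/5, 3/5, 4/5, 1] 5 = 1 := rfl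
    by_cases hmem : (i, j) ∈ ({(0, 1), (0, 3), (0, 4), (1, 2), (1, 3)} : Set (Fin 6 × Fin 6))
    · simp only [Set.mem_insert_iff, Set.mem_singleton_iff, Prod.mk.injEq] at hmem
      rcases hmem with ⟨hi, hj⟩ | ⟨hi, hj⟩ | ⟨hi, hj⟩ | ⟨hi, hj⟩ | ⟨hi, hj⟩ <;>
          subst hi <;> subst hj <;> simp only [hD, smul_lie, lie_smul]
      · rw [h12, map_neg, hD]
        simp only [v0, v1, v2, v3, v4, v5]
        module
      · rw [h14, map_neg, hD]
        simp only [v0, v1, v2, v3, v4, v5]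
        module
      · rw [h15, map_neg, hD]
        simp only [v0, v1, v2, v3, v4, v5]
        module
      · rw [h23, map_neg, hD]
        simp only [v0, v1, v2, v3, v4, v5]
        module
      · rw [h24, map_neg, hD]
        simp only [v0, v1, v2, v3, v4, v5]
        module
    · have h := hzero i j hlt hmem
      rw [h, hD, hD, smul_lie, lie_smul, h, map_zero, smul_zero, smul_zero, add_zero]
  have key : ∀ i j : Fin 6, D ⁅e i, e j⁆ = ⁅D (e i), e j⁆ + ⁅e i, D (e j)⁆ := by
    intro i j
    rcases lt_trichotomy i j with h | h | h
    · exact keyLT i j h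
    · subst h; simp [hD, lie_smul, smul_lie]
    · have hk := keyLT j i h
      rw [← lie_skew (e i) (e j), map_neg, hk, ← lie_skew (D (e i)) (e j),
        ← lie_skew (e i) (D (e j))]
      abel
  intro x y
  rw [← Module.Basis.sum_repr e x, ← Module.Basis.sum_repr e y]
  simp only [my_lie_sum, my_sum_lie, map_sum, lie_smul, smul_lie, map_smul, smul_add]
  rw [← Finset.sum_add_distrib]
  refine Finset.sum_congr rfl fun i _ => ?_
  simp only [my_lie_sum, my_sum_lie, map_sum, lie_smul, smul_lie, map_smul, smul_add,
    Finset.smul_sum]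
  rw [← Finset.sum_add_distrib]
  refine Finset.sum_congr rfl fun j _ => ?_
  rw [key, smul_add, smul_add]
end

section
/- Let g be the 6-dimensional real nilpotent Lie algebra with de¹ = de² = 0, de³ = e¹∧e², de⁴ = e¹∧e³, de⁵ = e¹∧e⁴, de⁶ = e²∧e⁵ + e³∧e⁴ (a filiform Lie algebra). Then g admits no sequence of positive integers w₁ ≤ ⋯ ≤ w₆ assigned to the basis satisfying simultaneously: (i) w_i + w_j ≤ w_k whenever de^k(e_i,e_j) ≠ 0; (ii) w_i + w_{7-i} ≥ w₆ and w_i + w_{7-i} > w₅ for all i; (iii) if w_i + w_{7-i} = w₆ and w_i ≠ w_{7-i}, then one of w_i, w_{7-i} occurs at least twice in the sequence; (iv) if w_i + w_{7-i} = w₆ with w_i = w_{7-i} and i ≠ 7-i, then w_i occurs more than twice. -/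
/-- The 6-dimensional filiform nilpotent Lie algebra
`(0,0,e¹²,e¹³,e¹⁴,e²⁵+e³⁴)`, with nonzero brackets
`[e₁,e₂] = -e₃, [e₁,e₃] = -e₄, [e₁,e₄] = -e₅, [e₂,e₅] = -e₆, [e₃,e₄] = -e₆`
(basis indexed by `Fin 6`), admits no sequence of positive integers `w₁ ≤ ⋯ ≤ w₆`
satisfying conditions (F1)–(F4) for the weight assignment induced by this basis order. -/
theorem stmt_15 (g : Type*) [LieRing g] [LieAlgebra ℝ g]
    (e : Module.Basis (Fin 6) ℝ g)
    (h12 : ⁅e 0, e 1⁆ = -e 2) (h13 : ⁅e 0, e 2⁆ = -e 3) (h14 : ⁅e 0, e 3⁆ = -e 4)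
    (h25 : ⁅e 1, e 4⁆ = -e 5) (h34 : ⁅e 2, e 3⁆ = -e 5)
    (hzero : ∀ i j : Fin 6, i < j →
      (i, j) ∉ ({(0, 1), (0, 2), (0, 3), (1, 4), (2, 3)} : Set (Fin 6 × Fin 6)) →
      ⁅e i, e j⁆ = 0) :
    ¬ ∃ w : Fin 6 → ℕ,
      -- (F1): positive nondecreasing weights
      (∀ i, 0 < w i) ∧ Monotone w ∧
      -- (i): w_i + w_j ≤ w_k whenever de^k(e_i,e_j) ≠ 0
      (∀ i j k : Fin 6, e.repr ⁅e i, e j⁆ k ≠ 0 → w i + w j ≤ w k) ∧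
      -- (ii) = (F2): w_i + w_{7-i} ≥ w₆ and w_i + w_{7-i} > w₅
      (∀ i : Fin 6, w 5 ≤ w i + w i.rev ∧ w 4 < w i + w i.rev) ∧
      -- (iii) = (F3)
      (∀ i : Fin 6, w i + w i.rev = w 5 → w i ≠ w i.rev →
        2 ≤ (Finset.univ.filter fun m => w m = w i).card ∨
        2 ≤ (Finset.univ.filter fun m => w m = w i.rev).card) ∧
      -- (iv) = (F4)
      (∀ i : Fin 6, w i + w i.rev = w 5 → w i = w i.rev → i ≠ i.rev →
        2 < (Finset.univ.filter fun m => w m = w i).card) := by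
  rintro ⟨w, hpos, hmono, hF1, hF2, hF3, _⟩
  have k1 : w 0 + w 1 ≤ w 2 := hF1 0 1 2 (by rw [h12]; simp)
  have k2 : w 0 + w 2 ≤ w 3 := hF1 0 2 3 (by rw [h13]; simp)
  have k3 : w 0 + w 3 ≤ w 4 := hF1 0 3 4 (by rw [h14]; simp)
  have k4 : w 2 + w 3 ≤ w 5 := hF1 2 3 5 (by rw [h34]; simp)
  have hrev2 : (2 : Fin 6).rev = 3 := by decide
  have hrev3 : (3 : Fin 6).rev = 2 := by decide
  have hgeq : w 5 ≤ w 2 + w 3 := by have := (hF2 2).1; rwa [hrev2] at this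
  have heq : w 2 + w 3 = w 5 := le_antisymm k4 hgeq
  have p0 := hpos 0
  have l12 : w 1 < w 2 := by omega
  have l23 : w 2 < w 3 := by omega
  have l34 : w 3 < w 4 := by omega
  have l01 : w 0 ≤ w 1 := hmono (by decide : (0:Fin 6) ≤ 1)
  have l45 : w 4 ≤ w 5 := hmono (by decide : (4:Fin 6) ≤ 5)
  have hne : w 2 ≠ w 3 := by omega
  have hc := hF3 2 (by rwa [hrev2]) (by rwa [hrev2])
  rw [hrev2] at hc
  clear hzero h12 h13 h14 h25 h34 hF1 hF2 hF3 hmono hpos e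
  have e2 : (Finset.univ.filter fun m => w m = w 2) = {2} := by
    ext m
    simp only [Finset.mem_filter, Finset.mem_univ, true_and, Finset.mem_singleton]
    fin_cases m <;> simp <;> omega
  have e3 : (Finset.univ.filter fun m => w m = w 3) = {3} := by
    ext m
    simp only [Finset.mem_filter, Finset.mem_univ, true_and, Finset.mem_singleton]
    fin_cases m <;> simp <;> omega
  rcases hc with h | h
  · rw [e2] at h; simp at h
  · rw [e3] at h; simp at h
end

section
/- Let g be a Lie algebra with a grading g = ⊕_α g_α over a torsion-free abelian group and e₁,…,eₙ an adapted basis with weight sequence w₁,…,wₙ satisfying (G1): if w_i + w_j = w_k and i ≠ j then i,j < k. Then relative to the antidiagonal metric Σᵢ e^i ⊗ e^{n+1-i}, the subspace ad g ⊆ g*⊗g is isotropic. -/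
/-- If `v` lies in the grading layer `gr α` and `w k ≠ α`, then the `k`-th coordinate of
`v` in the adapted basis vanishes. -/
lemma adapted_repr_eq_zero {A : Type*} [AddCommGroup A] [DecidableEq A]
    {n : ℕ} {g : Type*} [LieRing g] [LieAlgebra ℝ g]
    {gr : A → Submodule ℝ g} (hinternal : DirectSum.IsInternal gr)
    {e : Module.Basis (Fin n) ℝ g} {w : Fin n → A}
    (hadapted : ∀ i : Fin n, e i ∈ gr (w i))
    {v : g} {α : A} (hv : v ∈ gr α) {k : Fin n} (hk : w k ≠ α) :
    e.repr v k = 0 := by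
  classical
  set r : g := ∑ i ∈ Finset.univ.filter (fun i => w i ≠ α), e.repr v i • e i with hr
  have hsum : v = ∑ i : Fin n, e.repr v i • e i := (e.sum_repr v).symm
  have hvr : v - r ∈ gr α := by
    have : v - r = ∑ i ∈ Finset.univ.filter (fun i => w i = α), e.repr v i • e i := by
      rw [hr]
      nth_rewrite 1 [hsum]
      rw [← Finset.sum_filter_add_sum_filter_not Finset.univ (fun i => w i = α)]
      simp
    rw [this]
    exact Submodule.sum_mem _ (fun i hi => by
      have : w i = α := (Finset.mem_filter.mp hi).2
      exact Submodule.smul_mem _ _ (this ▸ hadapted i))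
  have hrα : r ∈ gr α := by
    have : r = v - (v - r) := (sub_sub_cancel v r).symm
    rw [this]; exact Submodule.sub_mem _ hv hvr
  have hrsup : r ∈ ⨆ β ∈ {β : A | β ≠ α}, gr β := by
    refine Submodule.sum_mem _ (fun i hi => ?_)
    have hwi : w i ≠ α := (Finset.mem_filter.mp hi).2
    exact Submodule.smul_mem _ _
      (Submodule.mem_iSup_of_mem (w i) (Submodule.mem_iSup_of_mem hwi (hadapted i)))
  have hdisj : Disjoint (gr α) (⨆ β ∈ {β : A | β ≠ α}, gr β) :=
    hinternal.submodule_iSupIndep.disjoint_biSup (by simp)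
  have hr0 : r = 0 := by
    have := hdisj.le_bot ⟨hrα, hrsup⟩
    simpa using this
  have h2 := congrArg (fun z => e.repr z k) hr0
  simp only [map_zero, Finsupp.coe_zero, Pi.zero_apply] at h2
  rw [hr, map_sum] at h2
  simp only [map_smul, Finsupp.coe_finset_sum, Finset.sum_apply, Finsupp.smul_apply,
    Module.Basis.repr_self, Finsupp.single_apply, smul_eq_mul, mul_ite, mul_one, mul_zero] at h2
  rw [Finset.sum_ite_eq' _ k] at h2
  simpa [hk] using h2

/-- For a Lie algebra graded over a torsion-free abelian group with an
adapted basis whose weight sequence satisfies (G1) (`w_i + w_j = w_k` and `i ≠ j` imply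
`i, j < k`), the subspace `ad g ⊆ g*⊗g` is isotropic for the scalar product induced by
the antidiagonal metric `Σ eⁱ ⊗ e^{n+1-i}`: concretely,
`⟨ad x, ad y⟩ = Σ_{i,k} (ad x)_{k i} (ad y)_{k̂ î} = 0` where `î = n+1-i`. -/
theorem stmt_18 (A : Type*) [AddCommGroup A] [NoZeroSMulDivisors ℤ A] [DecidableEq A]
    (n : ℕ) (g : Type*) [LieRing g] [LieAlgebra ℝ g]
    (gr : A → Submodule ℝ g)
    (hinternal : DirectSum.IsInternal gr)
    (hbr : ∀ α β : A, ∀ x ∈ gr α, ∀ y ∈ gr β, ⁅x, y⁆ ∈ gr (α + β))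
    (e : Module.Basis (Fin n) ℝ g) (w : Fin n → A)
    (hadapted : ∀ i : Fin n, e i ∈ gr (w i))
    (hG1 : ∀ i j k : Fin n, w i + w j = w k → i ≠ j → i < k ∧ j < k) :
    ∀ x y : g,
      ∑ i : Fin n, ∑ k : Fin n,
        e.repr ⁅x, e i⁆ k * e.repr ⁅y, e i.rev⁆ k.rev = 0 := by
  -- key: for any x, if ¬ i < k then repr ⁅x, e i⁆ k = 0
  have key : ∀ (x : g) (i k : Fin n), ¬ i < k → e.repr ⁅x, e i⁆ k = 0 := by
    intro x i k hik
    have hx : ⁅x, e i⁆ = ∑ j : Fin n, e.repr x j • ⁅e j, e i⁆ := by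
      set F : g →ₗ[ℝ] g :=
        { toFun := fun z => ⁅z, e i⁆, map_add' := fun a b => add_lie a b _,
          map_smul' := fun c z => smul_lie c z _ } with hF
      have hFz : ∀ z : g, ⁅z, e i⁆ = F z := fun z => rfl
      rw [hFz]
      conv_lhs => rw [← e.sum_repr x]
      rw [map_sum]
      refine Finset.sum_congr rfl (fun j _ => ?_)
      rw [map_smul, ← hFz]
    rw [hx, map_sum, Finsupp.finset_sum_apply]
    refine Finset.sum_eq_zero (fun j _ => ?_)
    by_cases hji : j = i
    · simp [hji]
    · have hmem : ⁅e j, e i⁆ ∈ gr (w j + w i) := hbr _ _ _ (hadapted j) _ (hadapted i)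
      by_cases hwk : w j + w i = w k
      · exact absurd (hG1 j i k hwk hji).2 hik
      · rw [map_smul]
        have := adapted_repr_eq_zero hinternal hadapted hmem (fun h => hwk h.symm)
        simp [this]
  intro x y
  refine Finset.sum_eq_zero (fun i _ => Finset.sum_eq_zero (fun k _ => ?_))
  by_cases h : i < k
  · have : ¬ i.rev < k.rev := by
      simp only [not_lt]
      exact le_of_lt (by simpa using Fin.rev_lt_rev.mpr h)
    rw [key y i.rev k.rev this, mul_zero]
  · rw [key x i k h, zero_mul]
end
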